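/- Let n ≥ 2 and a > 0 be fixed, and define for t in the domain D = {t > 0 : 1 + cosh a - 2cosh t - 2(cosh t - 1)cos(π/n) < 0} the functions A(t) = arccos(-√(cosh a - 1)(1 + cosh a - 2cosh t·cos(π/n)) / √(2(2cosh²t - 1 - cosh a)(cosh a - cos(2π/n)))) and C(t) = arccos((cosh t - cosh a·cosh t + 2(cosh²t - 1)cos(π/n))/(1 + cosh a - 2cosh²t)). Then on D, A and C are differentiable with dA/dt = 2(cosh t - cos(π/n)) sinh a·sinh t / ((1 + cosh a - 2cosh²t)√R) and dC/dt = -(cosh a - 1)(1 + cosh a + 2cosh²t - 4cosh t·cos(π/n)) / ((1 + cosh a - 2cosh²t)√R), where R = 1 - cosh a(2 + cosh a) + 2cosh²t + 4(cosh a - 1)cosh t·cos(π/n) - 2sinh²t·cos(2π/n). -/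

import Mathlib

open Real

set_option maxHeartbeats 1000000 in
/-- Derivatives of the dihedral angles `A(t)`, `C(t)` of a compact hyperbolic
antiprism with respect to the lateral edge length `t`. -/
theorem stmt_18 (n : ℕ) (hn : 2 ≤ n) (a : ℝ) (ha : 0 < a) :
    ∀ t : ℝ, 0 < t →
      1 + Real.cosh a - 2 * Real.cosh t
        - 2 * (Real.cosh t - 1) * Real.cos (π / n) < 0 →
      HasDerivAt (fun s : ℝ => Real.arccos
          (-(Real.sqrt (Real.cosh a - 1)
              * (1 + Real.cosh a - 2 * Real.cosh s * Real.cos (π / n)))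
            / Real.sqrt (2 * (2 * Real.cosh s ^ 2 - 1 - Real.cosh a)
              * (Real.cosh a - Real.cos (2 * π / n)))))
        (2 * (Real.cosh t - Real.cos (π / n)) * Real.sinh a * Real.sinh t
          / ((1 + Real.cosh a - 2 * Real.cosh t ^ 2)
            * Real.sqrt (1 - Real.cosh a * (2 + Real.cosh a) + 2 * Real.cosh t ^ 2
              + 4 * (Real.cosh a - 1) * Real.cosh t * Real.cos (π / n)
              - 2 * Real.sinh t ^ 2 * Real.cos (2 * π / n)))) t ∧
      HasDerivAt (fun s : ℝ => Real.arccos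
          ((Real.cosh s - Real.cosh a * Real.cosh s
              + 2 * (Real.cosh s ^ 2 - 1) * Real.cos (π / n))
            / (1 + Real.cosh a - 2 * Real.cosh s ^ 2)))
        (-((Real.cosh a - 1) * (1 + Real.cosh a + 2 * Real.cosh t ^ 2
              - 4 * Real.cosh t * Real.cos (π / n)))
          / ((1 + Real.cosh a - 2 * Real.cosh t ^ 2)
            * Real.sqrt (1 - Real.cosh a * (2 + Real.cosh a) + 2 * Real.cosh t ^ 2
              + 4 * (Real.cosh a - 1) * Real.cosh t * Real.cos (π / n)
              - 2 * Real.sinh t ^ 2 * Real.cos (2 * π / n)))) t := by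
  intro t ht hdom
  have hK : 1 < Real.cosh a := Real.one_lt_cosh.mpr (ne_of_gt ha)
  have hc : 1 < Real.cosh t := Real.one_lt_cosh.mpr (ne_of_gt ht)
  have hst : 0 < Real.sinh t := by rwa [Real.sinh_pos_iff]
  have hsa : 0 < Real.sinh a := by rwa [Real.sinh_pos_iff]
  have hp1 : Real.cos (π / n) ≤ 1 := Real.cos_le_one _
  have hq1 : Real.cos (2 * π / n) ≤ 1 := Real.cos_le_one _
  have hq : Real.cos (2 * π / n) = 2 * Real.cos (π / n) ^ 2 - 1 := by
    rw [show 2 * π / (n : ℝ) = 2 * (π / n) by ring, Real.cos_two_mul]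
  have hs2 : Real.sinh t ^ 2 = Real.cosh t ^ 2 - 1 := Real.sinh_sq t
  have hch : HasDerivAt Real.cosh (Real.sinh t) t := Real.hasDerivAt_cosh t
  have hX2 : Real.sqrt (Real.cosh a - 1) ^ 2 = Real.cosh a - 1 :=
    Real.sq_sqrt (by linarith)
  have hY2 : Real.sqrt (Real.cosh a + 1) ^ 2 = Real.cosh a + 1 :=
    Real.sq_sqrt (by linarith)
  have hY0 : 0 < Real.sqrt (Real.cosh a + 1) := Real.sqrt_pos.mpr (by linarith)
  have hsaXY : Real.sinh a = Real.sqrt (Real.cosh a - 1) * Real.sqrt (Real.cosh a + 1) := by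
    rw [← Real.sqrt_mul (by linarith),
      show (Real.cosh a - 1) * (Real.cosh a + 1) = Real.cosh a ^ 2 - 1 by ring,
      ← Real.sinh_sq, Real.sqrt_sq hsa.le]
  set c := Real.cosh t with hcdef
  set K := Real.cosh a with hKdef
  set p := Real.cos (π / n) with hpdef
  set q := Real.cos (2 * π / n) with hqdef
  set st := Real.sinh t with hstdef
  set X := Real.sqrt (K - 1) with hXdef
  set Y := Real.sqrt (K + 1) with hYdef
  have hv : 0 < 2 * c ^ 2 - 1 - K := by
    nlinarith [mul_nonneg (by linarith : (0:ℝ) ≤ c - 1) (by linarith : (0:ℝ) ≤ 1 - p),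
      sq_nonneg (c - 1)]
  have hD0 : 1 + K - 2 * c ^ 2 < 0 := by linarith
  have hKq : 0 < K - q := by linarith
  have hG : 0 < 2 * (2 * c ^ 2 - 1 - K) * (K - q) := by
    have := mul_pos (by linarith : (0:ℝ) < 2 * (2 * c ^ 2 - 1 - K)) hKq
    linarith [this]
  have hP1 : 0 < (c - 1) * (2 * c + 1 + K - 2 * (c + 1) * p) := by
    have h1 : 0 < 2 * c + 1 + K - 2 * (c + 1) * p := by
      nlinarith [mul_nonneg (by linarith : (0:ℝ) ≤ c + 1) (by linarith : (0:ℝ) ≤ 1 - p)]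
    exact mul_pos (by linarith) h1
  have hP2 : 0 < (c + 1) * (2 * c - 1 - K + 2 * (c - 1) * p) :=
    mul_pos (by linarith) (by linarith)
  have hRid : st ^ 2 * (1 - K * (2 + K) + 2 * c ^ 2 + 4 * (K - 1) * c * p - 2 * st ^ 2 * q)
      = ((c - 1) * (2 * c + 1 + K - 2 * (c + 1) * p))
        * ((c + 1) * (2 * c - 1 - K + 2 * (c - 1) * p)) := by
    rw [hq, hs2]; ring
  have hR : 0 < 1 - K * (2 + K) + 2 * c ^ 2 + 4 * (K - 1) * c * p - 2 * st ^ 2 * q := by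
    have h1 : 0 < st ^ 2 * (1 - K * (2 + K) + 2 * c ^ 2 + 4 * (K - 1) * c * p - 2 * st ^ 2 * q) := by
      rw [hRid]; exact mul_pos hP1 hP2
    by_contra h
    push_neg at h
    nlinarith [pow_pos hst 2]
  set Z := Real.sqrt (1 - K * (2 + K) + 2 * c ^ 2 + 4 * (K - 1) * c * p - 2 * st ^ 2 * q)
    with hZdef
  have hZ0 : 0 < Z := Real.sqrt_pos.mpr hR
  have hZ2 : Z ^ 2 = 1 - K * (2 + K) + 2 * c ^ 2 + 4 * (K - 1) * c * p - 2 * st ^ 2 * q :=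
    Real.sq_sqrt hR.le
  set W := Real.sqrt (2 * (2 * c ^ 2 - 1 - K) * (K - q)) with hWdef
  have hW0 : 0 < W := Real.sqrt_pos.mpr hG
  have hW2 : W ^ 2 = 2 * (2 * c ^ 2 - 1 - K) * (K - q) := Real.sq_sqrt hG.le
  constructor
  · -- A part
    have hu : HasDerivAt (fun s : ℝ => -(X * (1 + K - 2 * Real.cosh s * p)))
        (X * (2 * p * st)) t := by
      have h1 := ((((hch.const_mul 2).mul_const p).const_sub (1 + K)).const_mul X).neg
      exact h1.congr_deriv (by ring)
    have hg : HasDerivAt (fun s : ℝ => 2 * (2 * Real.cosh s ^ 2 - 1 - K) * (K - q))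
        (8 * c * st * (K - q)) t := by
      have h1 := (((((hch.pow 2).const_mul 2).sub_const 1).sub_const K).const_mul 2).mul_const
        (K - q)
      exact h1.congr_deriv (by push_cast; ring)
    have hw : HasDerivAt (fun s : ℝ => Real.sqrt (2 * (2 * Real.cosh s ^ 2 - 1 - K) * (K - q)))
        (8 * c * st * (K - q) / (2 * W)) t := hg.sqrt (ne_of_gt hG)
    have hfA : HasDerivAt (fun s : ℝ => -(X * (1 + K - 2 * Real.cosh s * p))
          / Real.sqrt (2 * (2 * Real.cosh s ^ 2 - 1 - K) * (K - q)))
        ((X * (2 * p * st) * W - -(X * (1 + K - 2 * c * p)) * (8 * c * st * (K - q) / (2 * W)))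
          / W ^ 2) t := hu.div hw (ne_of_gt hW0)
    have key2 : 2 * (2 * c ^ 2 - 1 - K) * (K - q) - (K - 1) * (1 + K - 2 * c * p) ^ 2
        = (K + 1) * (1 - K * (2 + K) + 2 * c ^ 2 + 4 * (K - 1) * c * p - 2 * st ^ 2 * q) := by
      rw [hq, hs2]; ring
    have hsq1 : (-(X * (1 + K - 2 * c * p)) / W) ^ 2
        = (K - 1) * (1 + K - 2 * c * p) ^ 2 / (2 * (2 * c ^ 2 - 1 - K) * (K - q)) := by
      rw [div_pow, hW2, neg_sq, mul_pow, hX2]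
    have hAbound : (-(X * (1 + K - 2 * c * p)) / W) ^ 2 < 1 := by
      rw [hsq1, div_lt_one hG]
      linarith [key2, mul_pos (by linarith : (0:ℝ) < K + 1) hR]
    have habs := abs_lt.mp ((sq_lt_one_iff_abs_lt_one _).mp hAbound)
    have hA1 : -(X * (1 + K - 2 * c * p)) / W ≠ -1 := ne_of_gt habs.1
    have hA2 : -(X * (1 + K - 2 * c * p)) / W ≠ 1 := ne_of_lt habs.2
    have hsqA : Real.sqrt (1 - (-(X * (1 + K - 2 * c * p)) / W) ^ 2) = Y * Z / W := by
      rw [show 1 - (-(X * (1 + K - 2 * c * p)) / W) ^ 2 = (Y * Z / W) ^ 2 from by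
        rw [hsq1]
        field_simp
        linear_combination W ^ 2 * key2
          + (K + 1) * (1 - K * (2 + K) + 2 * c ^ 2 + 4 * (K - 1) * c * p - 2 * st ^ 2 * q) * hW2
          - 2 * (2 * c ^ 2 - 1 - K) * (K - q) * Z ^ 2 * hY2
          - 2 * (2 * c ^ 2 - 1 - K) * (K - q) * (K + 1) * hZ2,
        Real.sqrt_sq (by positivity)]
    have hcomp := (Real.hasDerivAt_arccos hA1 hA2).comp t hfA
    rw [hsqA] at hcomp
    rw [show 2 * (c - p) * Real.sinh a * st / ((1 + K - 2 * c ^ 2) * Z)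
        = -(1 / (Y * Z / W))
          * ((X * (2 * p * st) * W - -(X * (1 + K - 2 * c * p)) * (8 * c * st * (K - q) / (2 * W)))
            / W ^ 2) from by
      rw [hsaXY]
      field_simp
      rw [div_eq_iff (ne_of_lt hD0)]
      linear_combination 4 * (c - p) * X * W ^ 2 * hY2
        + 4 * X * ((c - p) * (K + 1) + p * (1 + K - 2 * c ^ 2)) * hW2]
    exact hcomp
  · -- C part
    have hN : HasDerivAt
        (fun s : ℝ => Real.cosh s - K * Real.cosh s + 2 * (Real.cosh s ^ 2 - 1) * p)
        (st - K * st + 2 * (2 * c * st) * p) t := by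
      have h1 := (hch.sub (hch.const_mul K)).add
        ((((hch.pow 2).sub_const 1).const_mul 2).mul_const p)
      exact h1.congr_deriv (by push_cast; ring)
    have hDd : HasDerivAt (fun s : ℝ => 1 + K - 2 * Real.cosh s ^ 2)
        (-(2 * (2 * c * st))) t := by
      have h1 := ((hch.pow 2).const_mul 2).const_sub (1 + K)
      exact h1.congr_deriv (by push_cast; ring)
    have hfC : HasDerivAt (fun s : ℝ =>
          (Real.cosh s - K * Real.cosh s + 2 * (Real.cosh s ^ 2 - 1) * p)
            / (1 + K - 2 * Real.cosh s ^ 2))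
        (((st - K * st + 2 * (2 * c * st) * p) * (1 + K - 2 * c ^ 2)
            - (c - K * c + 2 * (c ^ 2 - 1) * p) * -(2 * (2 * c * st)))
          / (1 + K - 2 * c ^ 2) ^ 2) t := hN.div hDd (ne_of_lt hD0)
    have hC1 : (c - K * c + 2 * (c ^ 2 - 1) * p) / (1 + K - 2 * c ^ 2) ≠ -1 := by
      intro h
      rw [div_eq_iff (ne_of_lt hD0)] at h
      nlinarith [hP1]
    have hC2 : (c - K * c + 2 * (c ^ 2 - 1) * p) / (1 + K - 2 * c ^ 2) ≠ 1 := by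
      intro h
      rw [div_eq_one_iff_eq (ne_of_lt hD0)] at h
      nlinarith [hP2]
    have hsqC : Real.sqrt (1 - ((c - K * c + 2 * (c ^ 2 - 1) * p) / (1 + K - 2 * c ^ 2)) ^ 2)
        = st * Z / (2 * c ^ 2 - 1 - K) := by
      rw [show 1 - ((c - K * c + 2 * (c ^ 2 - 1) * p) / (1 + K - 2 * c ^ 2)) ^ 2
          = (st * Z / (2 * c ^ 2 - 1 - K)) ^ 2 from by
        have e1 : (st * Z / (2 * c ^ 2 - 1 - K)) ^ 2
            = ((2 * c ^ 2 - 1 - K) ^ 2 - (c - K * c + 2 * (c ^ 2 - 1) * p) ^ 2)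
              / (2 * c ^ 2 - 1 - K) ^ 2 := by
          rw [div_pow]
          congr 1
          rw [mul_pow, hZ2, hq, hs2]
          ring
        rw [div_pow, show ((1 + K - 2 * c ^ 2) : ℝ) ^ 2 = (2 * c ^ 2 - 1 - K) ^ 2 by ring,
          one_sub_div (pow_ne_zero 2 (ne_of_gt hv)), e1],
        Real.sqrt_sq (by positivity)]
    have hcomp := (Real.hasDerivAt_arccos hC1 hC2).comp t hfC
    rw [hsqC] at hcomp
    rw [show -((K - 1) * (1 + K + 2 * c ^ 2 - 4 * c * p)) / ((1 + K - 2 * c ^ 2) * Z)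
        = -(1 / (st * Z / (2 * c ^ 2 - 1 - K)))
          * (((st - K * st + 2 * (2 * c * st) * p) * (1 + K - 2 * c ^ 2)
              - (c - K * c + 2 * (c ^ 2 - 1) * p) * -(2 * (2 * c * st)))
            / (1 + K - 2 * c ^ 2) ^ 2) from by
      field_simp
      rw [neg_inj, div_eq_div_iff (ne_of_lt hD0) (pow_ne_zero 2 (ne_of_lt hD0))]
      ring]
    exact hcomp
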